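/- Suppose in addition that A† : S(ℝⁿ) → S(ℝⁿ) and Ã† : S(ℝ^{n+k}) → S(ℝ^{n+k}) are continuous linear operators with (Aφ|φ')_{L²(ℝⁿ)} = (φ|A†φ')_{L²(ℝⁿ)} for all φ,φ' ∈ S(ℝⁿ), and that T*_{Ŝ,χ} ∘ Ã† = A† ∘ T*_{Ŝ,χ} on S(ℝ^{n+k}) for every χ ∈ S(ℝᵏ). Let ψ ∈ S'(ℝⁿ) be nonzero and λ ∈ ℂ be such that ⟨ψ, conj(A†φ)⟩ = λ⟨ψ, conj(φ)⟩ for all φ ∈ S(ℝⁿ), and let χ ∈ S(ℝᵏ) be nonzero. Then the tempered distribution Ψ ∈ S'(ℝ^{n+k}) defined by ⟨Ψ, conj(Θ)⟩ := ⟨ψ, conj(T*_{Ŝ,χ}Θ)⟩ for Θ ∈ S(ℝ^{n+k}) is well defined, nonzero, and satisfies ⟨Ψ, conj(Ã†Θ)⟩ = λ⟨Ψ, conj(Θ)⟩ for all Θ ∈ S(ℝ^{n+k}); i.e. generalized eigenvectors of A give rise to generalized eigenvectors of Ã with the same generalized eigenvalue. -/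

import Mathlib

set_option maxHeartbeats 1000000

open MeasureTheory Complex SchwartzMap
open scoped ComplexConjugate FourierTransform RealInnerProductSpace

noncomputable section

namespace Stmt9Aux

variable {D : Type*} [NormedAddCommGroup D] [NormedSpace ℝ D]

lemma contDiff_conj_comp {f : D → ℂ} {N : WithTop ℕ∞} (hf : ContDiff ℝ N f) :
    ContDiff ℝ N (fun x => conj (f x)) := by
  have h1 : (fun x => conj (f x)) = ⇑Complex.conjLIE ∘ f := by
    funext y; simp
  rw [h1]
  exact (Complex.conjCLE.toContinuousLinearMap.contDiff).comp hf

/-- Conjugation on complex-valued Schwartz space, as a real-linear CLM. -/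
def conjCLM (D : Type*) [NormedAddCommGroup D] [NormedSpace ℝ D] :
    𝓢(D, ℂ) →L[ℝ] 𝓢(D, ℂ) :=
  mkCLM (𝕜 := ℝ) (fun f x => conj (f x))
    (fun f g x => by simp)
    (fun a f x => by
      simp only [SchwartzMap.smul_apply, Pi.smul_apply, RingHom.id_apply, starRingEnd_apply,
        star_smul, star_trivial])
    (fun f => contDiff_conj_comp f.smooth')
    (fun m => ⟨{m}, 1, zero_le_one, fun f x => by
      have h1 : (fun y => conj (f y)) = ⇑Complex.conjLIE ∘ ⇑f := by
        funext y; simp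
      beta_reduce
      rw [h1, Complex.conjLIE.norm_iteratedFDeriv_comp_left _ x m.2, Finset.sup_singleton,
        one_mul]
      exact SchwartzMap.le_seminorm ℝ m.1 m.2 f x⟩)

@[simp] lemma conjCLM_apply (f : 𝓢(D, ℂ)) (x : D) : conjCLM D f x = conj (f x) := rfl

lemma conjCLM_conjCLM (f : 𝓢(D, ℂ)) : conjCLM D (conjCLM D f) = f := by
  ext x; simp

lemma conjCLM_smul (c : ℂ) (f : 𝓢(D, ℂ)) :
    conjCLM D (c • f) = (conj c) • conjCLM D f := by
  ext x; simp

variable {Y : Type*} [NormedAddCommGroup Y] [NormedSpace ℝ Y]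

lemma hasTemperateGrowth_comp_snd (χ : 𝓢(Y, ℂ)) :
    Function.HasTemperateGrowth (fun p : D × Y => χ p.2) := by
  have hL : (fun p : D × Y => χ p.2) = ⇑χ ∘ ⇑(ContinuousLinearMap.snd ℝ D Y) := rfl
  constructor
  · rw [hL]; exact χ.smooth'.comp (ContinuousLinearMap.snd ℝ D Y).contDiff
  · intro N
    refine ⟨0, SchwartzMap.seminorm ℝ 0 N χ, fun p => ?_⟩
    rw [hL, (ContinuousLinearMap.snd ℝ D Y).iteratedFDeriv_comp_right (χ.smooth ⊤) p
      (mod_cast le_top)]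
    refine le_trans (ContinuousMultilinearMap.norm_compContinuousLinearMap_le _ _) ?_
    simp only [pow_zero, mul_one]
    have h2 : (∏ _i : Fin N, ‖ContinuousLinearMap.snd ℝ D Y‖) ≤ 1 :=
      Finset.prod_le_one (fun _ _ => norm_nonneg _)
        (fun _ _ => ContinuousLinearMap.norm_snd_le _ _ _)
    calc ‖iteratedFDeriv ℝ N (⇑χ) ((ContinuousLinearMap.snd ℝ D Y) p)‖ *
          ∏ _i : Fin N, ‖ContinuousLinearMap.snd ℝ D Y‖
        ≤ SchwartzMap.seminorm ℝ 0 N χ * 1 :=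
          mul_le_mul (χ.norm_iteratedFDeriv_le_seminorm ℝ N _) h2
            (Finset.prod_nonneg fun _ _ => norm_nonneg _) (apply_nonneg _ _)
      _ = SchwartzMap.seminorm ℝ 0 N χ := by simp

section Euclid

variable (n k : ℕ)

/-- Linear identification of `EuclideanSpace ℝ (Fin n ⊕ Fin k)` with `ℝⁿ × ℝᵏ`. -/
def epLE : EuclideanSpace ℝ (Fin n ⊕ Fin k) ≃ₗ[ℝ] (Fin n → ℝ) × (Fin k → ℝ) where
  toFun q := (fun i => q (Sum.inl i), fun i => q (Sum.inr i))
  invFun p := (WithLp.equiv 2 (Fin n ⊕ Fin k → ℝ)).symm (Sum.elim p.1 p.2)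
  map_add' _ _ := rfl
  map_smul' _ _ := rfl
  left_inv q := PiLp.ext fun i => by cases i <;> rfl
  right_inv p := rfl

/-- The same, as a continuous linear equivalence. -/
def epCLE : EuclideanSpace ℝ (Fin n ⊕ Fin k) ≃L[ℝ] (Fin n → ℝ) × (Fin k → ℝ) :=
  (epLE n k).toContinuousLinearEquiv

lemma mpP : MeasurePreserving (⇑(epCLE n k)) volume volume := by
  have h1 := EuclideanSpace.volume_preserving_symm_measurableEquiv_toLp (Fin n ⊕ Fin k)
  have h2 : MeasurePreserving
      (⇑(MeasurableEquiv.sumPiEquivProdPi (fun _ : Fin n ⊕ Fin k => ℝ))) volume volume := by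
    have := (volume_measurePreserving_sumPiEquivProdPi_symm
      (fun _ : Fin n ⊕ Fin k => ℝ)).symm
      (MeasurableEquiv.sumPiEquivProdPi (fun _ : Fin n ⊕ Fin k => ℝ)).symm
    simpa using this
  exact h2.comp h1

lemma embP : MeasurableEmbedding (⇑(epCLE n k)) :=
  (epCLE n k).toHomeomorph.measurableEmbedding

lemma mpX : MeasurePreserving (⇑(EuclideanSpace.equiv (Fin n) ℝ)) volume volume :=
  EuclideanSpace.volume_preserving_symm_measurableEquiv_toLp (Fin n)

lemma embX : MeasurableEmbedding (⇑(EuclideanSpace.equiv (Fin n) ℝ)) :=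
  (EuclideanSpace.equiv (Fin n) ℝ).toHomeomorph.measurableEmbedding

/-- The isometric inclusion `ℝⁿ_eucl → ℝ^{n+k}_eucl` corresponding to `x ↦ (x, 0)`. -/
def jCLM : EuclideanSpace ℝ (Fin n) →L[ℝ] EuclideanSpace ℝ (Fin n ⊕ Fin k) :=
  (((epCLE n k).symm : ((Fin n → ℝ) × (Fin k → ℝ)) →L[ℝ] EuclideanSpace ℝ (Fin n ⊕ Fin k))).comp
    ((ContinuousLinearMap.inl ℝ (Fin n → ℝ) (Fin k → ℝ)).comp
      ((EuclideanSpace.equiv (Fin n) ℝ : EuclideanSpace ℝ (Fin n) →L[ℝ] (Fin n → ℝ))))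

lemma jCLM_apply_inl (ξ : EuclideanSpace ℝ (Fin n)) (i : Fin n) :
    jCLM n k ξ (Sum.inl i) = ξ i := rfl

lemma jCLM_apply_inr (ξ : EuclideanSpace ℝ (Fin n)) (i : Fin k) :
    jCLM n k ξ (Sum.inr i) = 0 := rfl

lemma norm_jCLM (ξ : EuclideanSpace ℝ (Fin n)) : ‖jCLM n k ξ‖ = ‖ξ‖ := by
  rw [EuclideanSpace.norm_eq, EuclideanSpace.norm_eq]
  congr 1
  rw [Fintype.sum_sum_type]
  simp [jCLM_apply_inl, jCLM_apply_inr]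

lemma isometry_jCLM : Isometry (⇑(jCLM n k)) :=
  AddMonoidHomClass.isometry_of_norm _ (norm_jCLM n k)

lemma inner_jCLM (q : EuclideanSpace ℝ (Fin n ⊕ Fin k)) (ξ : EuclideanSpace ℝ (Fin n)) :
    ⟪q, jCLM n k ξ⟫ =
      ⟪(EuclideanSpace.equiv (Fin n) ℝ).symm ((epCLE n k q).1), ξ⟫ := by
  rw [PiLp.inner_apply, PiLp.inner_apply, Fintype.sum_sum_type]
  simp [jCLM_apply_inl, jCLM_apply_inr]
  rfl

end Euclid

section Key

variable {n k : ℕ}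

/-- The key identity: the partial integral of a Schwartz function on a product, assuming
it is Schwartz, is recovered by a slice of the full Fourier transform. -/
lemma key (n k : ℕ) (W : 𝓢((Fin n → ℝ) × (Fin k → ℝ), ℂ)) (h : 𝓢(Fin n → ℝ, ℂ))
    (hW : ∀ x, h x = ∫ y, W (x, y)) :
    compCLMOfContinuousLinearEquiv ℂ (EuclideanSpace.equiv (Fin n) ℝ).symm
      ((fourierTransformCLE ℂ 𝓢(EuclideanSpace ℝ (Fin n), ℂ)).symm
        (compCLMOfAntilipschitz ℂ (jCLM n k).hasTemperateGrowth
          (isometry_jCLM n k).antilipschitz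
          (fourierTransformCLE ℂ 𝓢(EuclideanSpace ℝ (Fin n ⊕ Fin k), ℂ)
            (compCLMOfContinuousLinearEquiv ℂ (epCLE n k) W)))) = h := by
  haveI : (volume : Measure ((Fin n → ℝ) × (Fin k → ℝ))).IsAddHaarMeasure :=
    Measure.prod.instIsAddHaarMeasure volume volume
  have hWint : Integrable (⇑W) (volume : Measure ((Fin n → ℝ) × (Fin k → ℝ))) := W.integrable
  have hkey : compCLMOfAntilipschitz ℂ (jCLM n k).hasTemperateGrowth
      (isometry_jCLM n k).antilipschitz
      (fourierTransformCLE ℂ 𝓢(EuclideanSpace ℝ (Fin n ⊕ Fin k), ℂ) (compCLMOfContinuousLinearEquiv ℂ (epCLE n k) W))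
      = fourierTransformCLE ℂ 𝓢(EuclideanSpace ℝ (Fin n), ℂ)
        (compCLMOfContinuousLinearEquiv ℂ (EuclideanSpace.equiv (Fin n) ℝ) h) := by
    ext ξ
    have hL : (compCLMOfAntilipschitz ℂ (jCLM n k).hasTemperateGrowth
        (isometry_jCLM n k).antilipschitz
        (fourierTransformCLE ℂ 𝓢(EuclideanSpace ℝ (Fin n ⊕ Fin k), ℂ) (compCLMOfContinuousLinearEquiv ℂ (epCLE n k) W))) ξ
        = 𝓕 (⇑W ∘ ⇑(epCLE n k)) (jCLM n k ξ) := by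
      simp only [compCLMOfAntilipschitz_apply, fourierTransformCLE_apply,
        compCLMOfContinuousLinearEquiv_apply, Function.comp_apply, SchwartzMap.fourier_coe]
      rfl
    rw [hL]
    have hR : (fourierTransformCLE ℂ 𝓢(EuclideanSpace ℝ (Fin n), ℂ)
        (compCLMOfContinuousLinearEquiv ℂ (EuclideanSpace.equiv (Fin n) ℝ) h)) ξ
        = 𝓕 (⇑h ∘ ⇑(EuclideanSpace.equiv (Fin n) ℝ)) ξ := by
      rfl
    rw [hR, Real.fourier_eq, Real.fourier_eq]
    set G : (Fin n → ℝ) × (Fin k → ℝ) → ℂ := fun p =>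
      𝐞 (-⟪(EuclideanSpace.equiv (Fin n) ℝ).symm p.1, ξ⟫) • W p with hGdef
    have hGcont : Continuous G := by
      apply Continuous.smul
      · exact continuous_subtype_val.comp (Real.continuous_fourierChar.comp
          (((((EuclideanSpace.equiv (Fin n) ℝ).symm.continuous.comp
            continuous_fst).inner continuous_const)).neg))
      · exact W.continuous
    have hGint : Integrable G (volume : Measure ((Fin n → ℝ) × (Fin k → ℝ))) := by
      refine hWint.norm.mono' hGcont.aestronglyMeasurable ?_
      filter_upwards with p
      rw [hGdef]
      rw [Circle.norm_smul]
    calc ∫ q, 𝐞 (-⟪q, jCLM n k ξ⟫) • (⇑W ∘ ⇑(epCLE n k)) q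
        = ∫ q, G ((epCLE n k) q) := by
          refine integral_congr_ae (Filter.Eventually.of_forall fun q => ?_)
          simp only [hGdef, Function.comp_apply, inner_jCLM]
      _ = ∫ p, G p := (mpP n k).integral_comp (embP n k) G
      _ = ∫ x, ∫ y, G (x, y) := by
          rw [Measure.volume_eq_prod]
          exact integral_prod G (by rwa [← Measure.volume_eq_prod])
      _ = ∫ x, 𝐞 (-⟪(EuclideanSpace.equiv (Fin n) ℝ).symm x, ξ⟫) • h x := by
          refine integral_congr_ae (Filter.Eventually.of_forall fun x => ?_)
          simp only [hGdef, Circle.smul_def]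
          rw [integral_smul, hW x]
      _ = ∫ v, 𝐞 (-⟪v, ξ⟫) • (⇑h ∘ ⇑(EuclideanSpace.equiv (Fin n) ℝ)) v := by
          rw [← (mpX n).integral_comp (embX n)
            (fun x => 𝐞 (-⟪(EuclideanSpace.equiv (Fin n) ℝ).symm x, ξ⟫) • h x)]
          refine integral_congr_ae (Filter.Eventually.of_forall fun v => ?_)
          simp only [Function.comp_apply, ContinuousLinearEquiv.symm_apply_apply]
  rw [hkey, ContinuousLinearEquiv.symm_apply_apply]
  ext x
  simp only [compCLMOfContinuousLinearEquiv_apply, Function.comp_apply,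
    ContinuousLinearEquiv.apply_symm_apply]

end Key

end Stmt9Aux

end

/-- (Generalized eigenvectors.) Suppose `A†`, `Ã†` are continuous
formal adjoints of `A`, `Ã` and that `T*_{Ŝ,χ} ∘ Ã† = A† ∘ T*_{Ŝ,χ}` on `S(ℝ^{n+k})`.
If `ψ ∈ S'(ℝⁿ)` is nonzero and `⟨ψ, conj(A†φ)⟩ = λ⟨ψ, conj(φ)⟩` for all `φ ∈ S(ℝⁿ)`,
and `χ ∈ S(ℝᵏ)` is nonzero, then the tempered distribution `Ψ` on `ℝ^{n+k}` defined by
`⟨Ψ, conj(Θ)⟩ = ⟨ψ, conj(T*_{Ŝ,χ}Θ)⟩` is well defined, nonzero, and satisfies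
`⟨Ψ, conj(Ã†Θ)⟩ = λ⟨Ψ, conj(Θ)⟩` for all `Θ ∈ S(ℝ^{n+k})`. -/
theorem stmt9 (n k : ℕ) (hn : 0 < n) (hk : 0 < k)
    -- `Ŝ` : a unitary operator mapping `S(ℝ^{n+k})` continuously into itself,
    -- together with `Ŝ⁻¹`
    (Sh : 𝓢((Fin n → ℝ) × (Fin k → ℝ), ℂ) ≃L[ℂ] 𝓢((Fin n → ℝ) × (Fin k → ℝ), ℂ))
    -- unitarity of `Ŝ` (preservation of the `L²` inner product)
    (hSh : ∀ Φ Ψ : 𝓢((Fin n → ℝ) × (Fin k → ℝ), ℂ),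
      ∫ p, conj (Sh Φ p) * Sh Ψ p = ∫ p, conj (Φ p) * Ψ p)
    -- the tensor product `(ψ ⊗ χ)(x,y) = ψ(x)χ(y)` of Schwartz functions
    (tensor : 𝓢(Fin n → ℝ, ℂ) → 𝓢(Fin k → ℝ, ℂ) → 𝓢((Fin n → ℝ) × (Fin k → ℝ), ℂ))
    (htensor : ∀ ψ χ p, tensor ψ χ p = ψ p.1 * χ p.2)
    -- the adjoint intertwiners `T*_{Ŝ,χ}`, mapping `S(ℝ^{n+k})` into `S(ℝⁿ)`:
    (Tstar : 𝓢(Fin k → ℝ, ℂ) → 𝓢((Fin n → ℝ) × (Fin k → ℝ), ℂ) → 𝓢(Fin n → ℝ, ℂ))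
    -- `(T*_{Ŝ,χ}Φ)(x) = ∫ conj(χ(y)) (ŜΦ)(x,y) dy`
    (hTstar : ∀ (χ : 𝓢(Fin k → ℝ, ℂ)) (Φ : 𝓢((Fin n → ℝ) × (Fin k → ℝ), ℂ))
      (x : Fin n → ℝ), Tstar χ Φ x = ∫ y : Fin k → ℝ, conj (χ y) * Sh Φ (x, y))
    -- complex conjugation of Schwartz functions
    (conjX : 𝓢(Fin n → ℝ, ℂ) → 𝓢(Fin n → ℝ, ℂ))
    (hconjX : ∀ φ x, conjX φ x = conj (φ x))
    (conjXY : 𝓢((Fin n → ℝ) × (Fin k → ℝ), ℂ) → 𝓢((Fin n → ℝ) × (Fin k → ℝ), ℂ))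
    (hconjXY : ∀ Φ p, conjXY Φ p = conj (Φ p))
    (A : 𝓢(Fin n → ℝ, ℂ) →L[ℂ] 𝓢(Fin n → ℝ, ℂ))
    (Atil : 𝓢((Fin n → ℝ) × (Fin k → ℝ), ℂ) →L[ℂ] 𝓢((Fin n → ℝ) × (Fin k → ℝ), ℂ))
    -- the intertwining relations for `A` and `Ã`
    (hint1 : ∀ (χ : 𝓢(Fin k → ℝ, ℂ)) (ψ : 𝓢(Fin n → ℝ, ℂ)),
      Atil (Sh.symm (tensor ψ χ)) = Sh.symm (tensor (A ψ) χ))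
    (hint2 : ∀ (χ : 𝓢(Fin k → ℝ, ℂ)) (Φ : 𝓢((Fin n → ℝ) × (Fin k → ℝ), ℂ)),
      Tstar χ (Atil Φ) = A (Tstar χ Φ))
    -- the formal adjoints `A†` and `Ã†`
    (Adag : 𝓢(Fin n → ℝ, ℂ) →L[ℂ] 𝓢(Fin n → ℝ, ℂ))
    (Atdag : 𝓢((Fin n → ℝ) × (Fin k → ℝ), ℂ) →L[ℂ] 𝓢((Fin n → ℝ) × (Fin k → ℝ), ℂ))
    -- `(Aφ|φ') = (φ|A†φ')` in `L²(ℝⁿ)`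
    (hAdag : ∀ φ φ' : 𝓢(Fin n → ℝ, ℂ),
      ∫ x : Fin n → ℝ, conj (A φ x) * φ' x = ∫ x : Fin n → ℝ, conj (φ x) * Adag φ' x)
    -- `(ÃΦ|Φ') = (Φ|Ã†Φ')` in `L²(ℝ^{n+k})`
    (hAtdag : ∀ Φ Φ' : 𝓢((Fin n → ℝ) × (Fin k → ℝ), ℂ),
      ∫ p, conj (Atil Φ p) * Φ' p = ∫ p, conj (Φ p) * Atdag Φ' p)
    -- the intertwining relation `T*_{Ŝ,χ} ∘ Ã† = A† ∘ T*_{Ŝ,χ}`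
    (hintdag : ∀ (χ : 𝓢(Fin k → ℝ, ℂ)) (Φ : 𝓢((Fin n → ℝ) × (Fin k → ℝ), ℂ)),
      Tstar χ (Atdag Φ) = Adag (Tstar χ Φ))
    -- a nonzero tempered distribution `ψ ∈ S'(ℝⁿ)` which is a generalized eigenvector
    -- of `A` with generalized eigenvalue `λ`
    (ψ : 𝓢(Fin n → ℝ, ℂ) →L[ℂ] ℂ) (hψ : ψ ≠ 0) (lam : ℂ)
    (heig : ∀ φ : 𝓢(Fin n → ℝ, ℂ), ψ (conjX (Adag φ)) = lam * ψ (conjX φ))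
    (χ : 𝓢(Fin k → ℝ, ℂ)) (hχ : χ ≠ 0) :
    ∃ Ψ : 𝓢((Fin n → ℝ) × (Fin k → ℝ), ℂ) →L[ℂ] ℂ,
      (∀ Θ : 𝓢((Fin n → ℝ) × (Fin k → ℝ), ℂ), Ψ (conjXY Θ) = ψ (conjX (Tstar χ Θ))) ∧
      Ψ ≠ 0 ∧
      (∀ Θ : 𝓢((Fin n → ℝ) × (Fin k → ℝ), ℂ),
        Ψ (conjXY (Atdag Θ)) = lam * Ψ (conjXY Θ)) := by
  classical
  -- local abbreviations for the continuous linear maps in the chain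
  let conjN := Stmt9Aux.conjCLM (Fin n → ℝ)
  let conjP := Stmt9Aux.conjCLM ((Fin n → ℝ) × (Fin k → ℝ))
  let mulx : 𝓢((Fin n → ℝ) × (Fin k → ℝ), ℂ) →L[ℝ] 𝓢((Fin n → ℝ) × (Fin k → ℝ), ℂ) :=
    bilinLeftCLM (ContinuousLinearMap.mul ℝ ℂ) (Stmt9Aux.hasTemperateGrowth_comp_snd χ)
  let compP : 𝓢((Fin n → ℝ) × (Fin k → ℝ), ℂ) →L[ℂ] 𝓢(EuclideanSpace ℝ (Fin n ⊕ Fin k), ℂ) :=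
    compCLMOfContinuousLinearEquiv ℂ (Stmt9Aux.epCLE n k)
  let slice : 𝓢(EuclideanSpace ℝ (Fin n ⊕ Fin k), ℂ) →L[ℂ] 𝓢(EuclideanSpace ℝ (Fin n), ℂ) :=
    compCLMOfAntilipschitz ℂ (Stmt9Aux.jCLM n k).hasTemperateGrowth
      (Stmt9Aux.isometry_jCLM n k).antilipschitz
  let compE : 𝓢(EuclideanSpace ℝ (Fin n), ℂ) →L[ℂ] 𝓢(Fin n → ℝ, ℂ) :=
    compCLMOfContinuousLinearEquiv ℂ (EuclideanSpace.equiv (Fin n) ℝ).symm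
  let FF : 𝓢((Fin n → ℝ) × (Fin k → ℝ), ℂ) → 𝓢(Fin n → ℝ, ℂ) := fun Φ =>
    compE ((fourierTransformCLE ℂ 𝓢(EuclideanSpace ℝ (Fin n), ℂ)).symm (slice (fourierTransformCLE ℂ 𝓢(EuclideanSpace ℝ (Fin n ⊕ Fin k), ℂ)
      (compP (mulx (conjP (Sh (conjP Φ))))))))
  -- pointwise facts about the local CLMs
  have hPapp : ∀ (Φ : 𝓢((Fin n → ℝ) × (Fin k → ℝ), ℂ)) p, conjP Φ p = conj (Φ p) :=
    fun Φ p => rfl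
  have hNapp : ∀ (u : 𝓢(Fin n → ℝ, ℂ)) x, conjN u x = conj (u x) := fun u x => rfl
  have hPP : ∀ Φ, conjP (conjP Φ) = Φ := fun Φ => Stmt9Aux.conjCLM_conjCLM Φ
  have hPsmul : ∀ (c : ℂ) Φ, conjP (c • Φ) = (conj c) • conjP Φ :=
    fun c Φ => Stmt9Aux.conjCLM_smul c Φ
  have hmulapp : ∀ (Φ : 𝓢((Fin n → ℝ) × (Fin k → ℝ), ℂ)) p, mulx Φ p = Φ p * χ p.2 :=
    fun Φ p => rfl
  have hmulsmul : ∀ (c : ℂ) Φ, mulx (c • Φ) = c • mulx Φ := by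
    intro c Φ
    ext p
    rw [hmulapp, SchwartzMap.smul_apply, SchwartzMap.smul_apply, hmulapp]
    simp [smul_eq_mul, mul_assoc]
  -- identification of the given abstract conjugations with the CLM versions
  have hXY : ∀ Θ, conjXY Θ = conjP Θ := fun Θ => SchwartzMap.ext fun p => by
    rw [hconjXY, hPapp]
  have hXn : ∀ u, conjX u = conjN u := fun u => SchwartzMap.ext fun x => by
    rw [hconjX, hNapp]
  -- the main pointwise identity
  have hFF : ∀ Θ, FF (conjP Θ) = conjN (Tstar χ Θ) := by
    intro Θ
    show compE ((fourierTransformCLE ℂ 𝓢(EuclideanSpace ℝ (Fin n), ℂ)).symm (slice (fourierTransformCLE ℂ 𝓢(EuclideanSpace ℝ (Fin n ⊕ Fin k), ℂ)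
      (compP (mulx (conjP (Sh (conjP (conjP Θ))))))))) = conjN (Tstar χ Θ)
    rw [hPP]
    refine Stmt9Aux.key n k (mulx (conjP (Sh Θ))) (conjN (Tstar χ Θ)) ?_
    intro x
    rw [hNapp, hTstar, ← integral_conj]
    refine integral_congr_ae (Filter.Eventually.of_forall fun y => ?_)
    show conj (conj (χ y) * Sh Θ (x, y)) = mulx (conjP (Sh Θ)) (x, y)
    rw [hmulapp, hPapp, map_mul, Complex.conj_conj, mul_comm]
  -- additivity and ℂ-linearity of the chain
  have hFFadd : ∀ Φ Φ', FF (Φ + Φ') = FF Φ + FF Φ' := by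
    intro Φ Φ'
    show compE ((fourierTransformCLE ℂ 𝓢(EuclideanSpace ℝ (Fin n), ℂ)).symm (slice (fourierTransformCLE ℂ 𝓢(EuclideanSpace ℝ (Fin n ⊕ Fin k), ℂ)
        (compP (mulx (conjP (Sh (conjP (Φ + Φ'))))))))) = _
    simp only [map_add]
    rfl
  have hFFsmul : ∀ (c : ℂ) Φ, FF (c • Φ) = c • FF Φ := by
    intro c Φ
    show compE ((fourierTransformCLE ℂ 𝓢(EuclideanSpace ℝ (Fin n), ℂ)).symm (slice (fourierTransformCLE ℂ 𝓢(EuclideanSpace ℝ (Fin n ⊕ Fin k), ℂ)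
        (compP (mulx (conjP (Sh (conjP (c • Φ))))))))) = _
    rw [hPsmul, _root_.map_smul, hPsmul, Complex.conj_conj, hmulsmul, _root_.map_smul,
      _root_.map_smul, _root_.map_smul, _root_.map_smul, _root_.map_smul]
  have hFFcont : Continuous FF :=
    compE.continuous.comp ((fourierTransformCLE ℂ 𝓢(EuclideanSpace ℝ (Fin n), ℂ)).symm.continuous.comp
      (slice.continuous.comp ((fourierTransformCLE ℂ 𝓢(EuclideanSpace ℝ (Fin n ⊕ Fin k), ℂ)).continuous.comp
        (compP.continuous.comp (mulx.continuous.comp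
          (conjP.continuous.comp (Sh.continuous.comp conjP.continuous)))))))
  -- the distribution
  refine ⟨⟨⟨⟨fun Φ => ψ (FF Φ), fun Φ Φ' => by simp only [hFFadd, map_add]⟩,
      fun c Φ => by simp only [hFFsmul, _root_.map_smul, RingHom.id_apply, smul_eq_mul]⟩,
      (ψ.continuous.comp hFFcont : _)⟩, ?_, ?_, ?_⟩
  · -- property 1
    intro Θ
    show ψ (FF (conjXY Θ)) = ψ (conjX (Tstar χ Θ))
    rw [hXY, hFF, hXn]
  · -- property 2 : nonvanishing
    have hex : ∃ φ₀, ψ φ₀ ≠ 0 := by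
      by_contra hcon
      push_neg at hcon
      exact hψ (ContinuousLinearMap.ext fun φ => by simp [hcon φ])
    obtain ⟨φ₀, hφ₀⟩ := hex
    -- a point where χ is nonzero
    have hey : ∃ y₀, χ y₀ ≠ 0 := by
      by_contra hcon
      push_neg at hcon
      exact hχ (SchwartzMap.ext fun y => by simp [hcon y])
    obtain ⟨y₀, hy₀⟩ := hey
    set u : 𝓢(Fin n → ℝ, ℂ) := conjX φ₀ with hu
    set c : ℂ := ∫ y, conj (χ y) * χ y with hc
    have hcr : c = ((∫ y, Complex.normSq (χ y) : ℝ) : ℂ) := by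
      rw [hc]
      calc ∫ y, conj (χ y) * χ y
          = ∫ y : Fin k → ℝ, ((Complex.normSq (χ y) : ℝ) : ℂ) :=
            integral_congr_ae (Filter.Eventually.of_forall fun y =>
              Complex.normSq_eq_conj_mul_self.symm)
        _ = ((∫ y, Complex.normSq (χ y) : ℝ) : ℂ) := integral_ofReal
    have hint : Integrable (fun y => Complex.normSq (χ y)) (volume : Measure (Fin k → ℝ)) := by
      refine ((χ.integrable (μ := volume)).norm.const_mul
        (SchwartzMap.seminorm ℝ 0 0 χ)).mono'
        ((Complex.continuous_normSq.comp χ.continuous).aestronglyMeasurable) ?_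
      filter_upwards with y
      have h1 : ‖Complex.normSq (χ y)‖ = ‖χ y‖ * ‖χ y‖ := by
        rw [Real.norm_eq_abs, _root_.abs_of_nonneg (Complex.normSq_nonneg _), Complex.normSq_eq_norm_sq,
          sq]
      rw [h1]
      exact mul_le_mul_of_nonneg_right (χ.norm_le_seminorm ℝ y) (norm_nonneg _)
    have hpos : 0 < ∫ y, Complex.normSq (χ y) := by
      rw [integral_pos_iff_support_of_nonneg (fun y => Complex.normSq_nonneg _) hint]
      have hopen : IsOpen (Function.support fun y => Complex.normSq (χ y)) := by
        have : (Function.support fun y => Complex.normSq (χ y))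
            = (fun y => Complex.normSq (χ y)) ⁻¹' {(0:ℝ)}ᶜ := by
          ext y; simp [Function.mem_support]
        rw [this]
        exact (Complex.continuous_normSq.comp χ.continuous).isOpen_preimage _
          isOpen_compl_singleton
      refine hopen.measure_pos volume ⟨y₀, ?_⟩
      simp [Function.mem_support, Complex.normSq_eq_zero, hy₀]
    have hcne : c ≠ 0 := by
      rw [hcr]
      exact_mod_cast ne_of_gt hpos
    -- the witness
    have hTs : Tstar χ (Sh.symm (tensor u χ)) = c • u := by
      ext x
      rw [hTstar]
      have hig : ∀ y, conj (χ y) * Sh (Sh.symm (tensor u χ)) (x, y)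
          = u x * (conj (χ y) * χ y) := by
        intro y
        rw [Sh.apply_symm_apply, htensor]
        ring
      rw [integral_congr_ae (Filter.Eventually.of_forall hig), integral_const_mul, hc]
      rw [SchwartzMap.smul_apply, smul_eq_mul, mul_comm]
    have hvne : ψ (FF (conjXY (Sh.symm (tensor u χ)))) ≠ 0 := by
      rw [hXY, hFF, hTs]
      have hcu : conjN (c • u) = conj c • φ₀ := by
        ext x
        rw [hNapp, SchwartzMap.smul_apply, SchwartzMap.smul_apply, smul_eq_mul, smul_eq_mul,
          map_mul, hu, hconjX, Complex.conj_conj]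
      rw [hcu, ContinuousLinearMap.map_smul, smul_eq_mul]
      exact mul_ne_zero (by simpa using hcne) hφ₀
    intro h0
    refine hvne ?_
    have h2 := congrFun (congrArg DFunLike.coe h0) (conjXY (Sh.symm (tensor u χ)))
    simpa using h2
  · -- property 3 : eigenvector equation
    intro Θ
    show ψ (FF (conjXY (Atdag Θ))) = lam * ψ (FF (conjXY Θ))
    rw [hXY, hFF, ← hXn, hintdag, heig, hXY, hFF, hXn]
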